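/- Let ρ be a quantum state and σ a positive definite quantum state on a finite-dimensional complex Hilbert space. Then D̂(ρ‖σ) = tr[σ·(σ^{−1/2} ρ σ^{−1/2})·log(σ^{−1/2} ρ σ^{−1/2})], where the matrix X log X is defined by functional calculus applied to x ↦ x log x extended by 0 at x = 0. -/

import Mathlib

open Matrix MeasureTheory
open scoped Kronecker Classical ComplexOrder

noncomputable section

namespace QPaper

variable {n : Type*}

/-- A quantum state: positive semidefinite matrix with trace one. -/
def IsState [Fintype n] (ρ : Matrix n n ℂ) : Prop :=
  ρ.PosSemidef ∧ ρ.trace = 1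

/-- The trace norm of a matrix: `tr √(XᴴX)`. -/
noncomputable def traceNorm [Fintype n] [DecidableEq n] (X : Matrix n n ℂ) : ℝ :=
  (((Matrix.posSemidef_conjTranspose_mul_self X).1.eigenvectorUnitary : Matrix n n ℂ) *
    diagonal (((↑) : ℝ → ℂ) ∘ (√·) ∘ (Matrix.posSemidef_conjTranspose_mul_self X).1.eigenvalues) *
    (star (Matrix.posSemidef_conjTranspose_mul_self X).1.eigenvectorUnitary : Matrix n n ℂ)).trace.re

/-- Functional calculus for Hermitian matrices: apply `f` to the eigenvalues. -/
noncomputable def matFun [Fintype n] [DecidableEq n] (f : ℝ → ℂ) (A : Matrix n n ℂ) :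
    Matrix n n ℂ :=
  if hA : A.IsHermitian then
    (hA.eigenvectorUnitary : Matrix n n ℂ) *
      Matrix.diagonal (fun i => f (hA.eigenvalues i)) *
        (hA.eigenvectorUnitary : Matrix n n ℂ)ᴴ
  else 0

/-- Matrix logarithm on the support (0 ↦ 0). -/
noncomputable def mlog [Fintype n] [DecidableEq n] (A : Matrix n n ℂ) : Matrix n n ℂ :=
  matFun (fun x => (Real.log x : ℂ)) A

/-- Real matrix powers on the support (Moore-Penrose style, 0 ↦ 0 for r ≠ 0). -/
noncomputable def mpow [Fintype n] [DecidableEq n] (A : Matrix n n ℂ) (r : ℝ) : Matrix n n ℂ :=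
  matFun (fun x => ((x ^ r : ℝ) : ℂ)) A

/-- Complex matrix powers on the support (0 ↦ 0). -/
noncomputable def mcpow [Fintype n] [DecidableEq n] (A : Matrix n n ℂ) (z : ℂ) : Matrix n n ℂ :=
  matFun (fun x => if x = 0 then 0 else (x : ℂ) ^ z) A

/-- The matrix `A log A`, functional calculus for `x ↦ x log x` (0 ↦ 0). -/
noncomputable def mXLogX [Fintype n] [DecidableEq n] (A : Matrix n n ℂ) : Matrix n n ℂ :=
  matFun (fun x => ((x * Real.log x : ℝ) : ℂ)) A

/-- Umegaki relative entropy `D(ρ‖K) = tr[ρ (log ρ - log K)]`. -/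
noncomputable def relEnt [Fintype n] [DecidableEq n] (ρ K : Matrix n n ℂ) : ℝ :=
  ((ρ * (mlog ρ - mlog K)).trace).re

/-- Belavkin–Staszewski entropy `D̂(ρ‖K) = tr[ρ log(ρ^{1/2} K⁻¹ ρ^{1/2})]`. -/
noncomputable def bsEnt [Fintype n] [DecidableEq n] (ρ K : Matrix n n ℂ) : ℝ :=
  ((ρ * mlog (mpow ρ (1/2) * mpow K (-1) * mpow ρ (1/2))).trace).re

/-- von Neumann entropy. -/
noncomputable def vnEnt [Fintype n] [DecidableEq n] (ρ : Matrix n n ℂ) : ℝ :=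
  -(((ρ * mlog ρ).trace).re)

/-- Operator norm of a matrix. -/
noncomputable def opNorm [Fintype n] [DecidableEq n] (X : Matrix n n ℂ) : ℝ :=
  ‖Matrix.toEuclideanCLM (𝕜 := ℂ) X‖

/-- `ker K ⊆ ker ρ`. -/
def kerLE [Fintype n] (K ρ : Matrix n n ℂ) : Prop :=
  ∀ v : n → ℂ, K.mulVec v = 0 → ρ.mulVec v = 0

/-- partial trace over the first factor. -/
noncomputable def ptrA {a b : Type*} [Fintype a] (ρ : Matrix (a × b) (a × b) ℂ) :
    Matrix b b ℂ :=
  Matrix.of fun i j => ∑ x : a, ρ (x, i) (x, j)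

/-- partial trace over the second factor. -/
noncomputable def ptrB {a b : Type*} [Fintype b] (ρ : Matrix (a × b) (a × b) ℂ) :
    Matrix a a ℂ :=
  Matrix.of fun i j => ∑ x : b, ρ (i, x) (j, x)

/-- partial trace over the middle factor of a tripartite system. -/
noncomputable def ptrMid {a b c : Type*} [Fintype b]
    (ρ : Matrix (a × b × c) (a × b × c) ℂ) : Matrix (a × c) (a × c) ℂ :=
  Matrix.of fun p q => ∑ y : b, ρ (p.1, y, p.2) (q.1, y, q.2)

/-- Conditional entropy `H_ρ(A|B) = S(ρ_{AB}) - S(ρ_B)`. -/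
noncomputable def condEnt {a b : Type*} [Fintype a] [Fintype b] [DecidableEq a] [DecidableEq b]
    (ρ : Matrix (a × b) (a × b) ℂ) : ℝ :=
  vnEnt ρ - vnEnt (ptrA ρ)

/-- Mutual information `I_ρ(A:B) = S(ρ_A) + S(ρ_B) - S(ρ_{AB})`. -/
noncomputable def mutInfo {a b : Type*} [Fintype a] [Fintype b] [DecidableEq a] [DecidableEq b]
    (ρ : Matrix (a × b) (a × b) ℂ) : ℝ :=
  vnEnt (ptrB ρ) + vnEnt (ptrA ρ) - vnEnt ρ

/-- Conditional mutual information `I_ρ(A:B|C)`. -/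
noncomputable def condMutInfo {a b c : Type*} [Fintype a] [Fintype b] [Fintype c]
    [DecidableEq a] [DecidableEq b] [DecidableEq c]
    (ρ : Matrix (a × b × c) (a × b × c) ℂ) : ℝ :=
  vnEnt (ptrMid ρ) + vnEnt (ptrA ρ) - vnEnt (ptrA (ptrA ρ)) - vnEnt ρ

/-- BS-conditional entropy `Ĥ_ρ(A|B) = -D̂(ρ ‖ 𝟙_A ⊗ ρ_B)`. -/
noncomputable def bsCondEnt {a b : Type*} [Fintype a] [Fintype b] [DecidableEq a] [DecidableEq b]
    (ρ : Matrix (a × b) (a × b) ℂ) : ℝ :=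
  -(bsEnt ρ ((1 : Matrix a a ℂ) ⊗ₖ ptrA ρ))

/-- BS-mutual information `Î_ρ(A:B) = D̂(ρ ‖ ρ_A ⊗ ρ_B)`. -/
noncomputable def bsMutInfo {a b : Type*} [Fintype a] [Fintype b] [DecidableEq a] [DecidableEq b]
    (ρ : Matrix (a × b) (a × b) ℂ) : ℝ :=
  bsEnt ρ (ptrB ρ ⊗ₖ ptrA ρ)

/-- BS-conditional mutual information `Î_ρ(A:B|C) = Ĥ_ρ(A|C) - Ĥ_ρ(A|BC)`. -/
noncomputable def bsCondMutInfo {a b c : Type*} [Fintype a] [Fintype b] [Fintype c]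
    [DecidableEq a] [DecidableEq b] [DecidableEq c]
    (ρ : Matrix (a × b × c) (a × b × c) ℂ) : ℝ :=
  bsCondEnt (ptrMid ρ) - bsCondEnt (a := a) (b := b × c) ρ

/-- Binary entropy. -/
noncomputable def binEnt (p : ℝ) : ℝ :=
  -(p * Real.log p) - (1 - p) * Real.log (1 - p)

/-- The function `f_{c₁,c₂}`. -/
noncomputable def fcc (c₁ c₂ p : ℝ) : ℝ :=
  p * Real.log (p + (1 - p) * c₁) + (1 - p) * Real.log ((1 - p) + p * c₂)

/-- The probability density `β₀`. -/
noncomputable def beta0 (t : ℝ) : ℝ :=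
  (Real.pi / 2) * (Real.cosh (Real.pi * t) + 1)⁻¹


section AltRepHelpers
variable {n : Type*} [Fintype n] [DecidableEq n]


lemma matFun_of_isHermitian (f : ℝ → ℂ) {A : Matrix n n ℂ} (hA : A.IsHermitian) :
    matFun f A = (hA.eigenvectorUnitary : Matrix n n ℂ) *
      Matrix.diagonal (fun i => f (hA.eigenvalues i)) *
        (hA.eigenvectorUnitary : Matrix n n ℂ)ᴴ := by
  rw [matFun, dif_pos hA]

lemma U_mul_Uh {A : Matrix n n ℂ} (hA : A.IsHermitian) :
    (hA.eigenvectorUnitary : Matrix n n ℂ) * (hA.eigenvectorUnitary : Matrix n n ℂ)ᴴ = 1 := by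
  rw [← Matrix.star_eq_conjTranspose]
  exact Matrix.mem_unitaryGroup_iff.mp hA.eigenvectorUnitary.2

lemma Uh_mul_U {A : Matrix n n ℂ} (hA : A.IsHermitian) :
    (hA.eigenvectorUnitary : Matrix n n ℂ)ᴴ * (hA.eigenvectorUnitary : Matrix n n ℂ) = 1 := by
  rw [← Matrix.star_eq_conjTranspose]
  exact Matrix.mem_unitaryGroup_iff'.mp hA.eigenvectorUnitary.2

lemma matFun_congr {f g : ℝ → ℂ} {A : Matrix n n ℂ} (hA : A.IsHermitian)
    (h : ∀ i, f (hA.eigenvalues i) = g (hA.eigenvalues i)) : matFun f A = matFun g A := by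
  rw [matFun_of_isHermitian f hA, matFun_of_isHermitian g hA]
  congr 2
  exact congrArg _ (funext h)

lemma matFun_mul (f g : ℝ → ℂ) {A : Matrix n n ℂ} (hA : A.IsHermitian) :
    matFun f A * matFun g A = matFun (fun x => f x * g x) A := by
  rw [matFun_of_isHermitian f hA, matFun_of_isHermitian g hA,
    matFun_of_isHermitian _ hA]
  rw [show ∀ U Df Dg Uh : Matrix n n ℂ, (U * Df * Uh) * (U * Dg * Uh)
      = U * (Df * (Uh * U) * Dg) * Uh from fun _ _ _ _ => by noncomm_ring,
    Uh_mul_U hA, Matrix.mul_one, Matrix.diagonal_mul_diagonal]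

lemma matFun_id {A : Matrix n n ℂ} (hA : A.IsHermitian) :
    matFun (fun x => (x : ℂ)) A = A := by
  rw [matFun_of_isHermitian _ hA]
  conv_rhs => rw [hA.spectral_theorem]
  rfl

lemma matFun_const (c : ℂ) {A : Matrix n n ℂ} (hA : A.IsHermitian) :
    matFun (fun _ => c) A = c • 1 := by
  rw [matFun_of_isHermitian _ hA]
  have : Matrix.diagonal (fun _ : n => c) = c • (1 : Matrix n n ℂ) := by
    ext i j
    by_cases h : i = j <;> simp [Matrix.diagonal_apply, Matrix.one_apply, h]
  rw [this, Matrix.mul_smul, Matrix.mul_one, Matrix.smul_mul, U_mul_Uh hA]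

lemma matFun_add (f g : ℝ → ℂ) {A : Matrix n n ℂ} (hA : A.IsHermitian) :
    matFun f A + matFun g A = matFun (fun x => f x + g x) A := by
  rw [matFun_of_isHermitian f hA, matFun_of_isHermitian g hA, matFun_of_isHermitian _ hA,
    ← Matrix.add_mul, ← Matrix.mul_add, Matrix.diagonal_add]

lemma matFun_real_isHermitian (g : ℝ → ℝ) {A : Matrix n n ℂ} (hA : A.IsHermitian) :
    (matFun (fun x => ((g x : ℝ) : ℂ)) A).IsHermitian := by
  rw [matFun_of_isHermitian _ hA]
  refine Matrix.isHermitian_mul_mul_conjTranspose _ ?_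
  rw [Matrix.IsHermitian, Matrix.diagonal_conjTranspose]
  exact congrArg Matrix.diagonal
    (funext fun i => by simp [Pi.star_apply, Complex.conj_ofReal])

lemma aeval_eq_matFun (p : Polynomial ℂ) {A : Matrix n n ℂ} (hA : A.IsHermitian) :
    (Polynomial.aeval A) p = matFun (fun x => p.eval ((x : ℝ) : ℂ)) A := by
  induction p using Polynomial.induction_on with
  | C c =>
    simp only [Polynomial.aeval_C, Polynomial.eval_C]
    rw [matFun_const c hA, Algebra.algebraMap_eq_smul_one]
  | add p q hp hq =>
    simp only [map_add, Polynomial.eval_add, hp, hq]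
    exact matFun_add _ _ hA
  | monomial k c ih =>
    have h1 : (Polynomial.aeval A) (Polynomial.C c * Polynomial.X ^ (k + 1))
        = (Polynomial.aeval A) (Polynomial.C c * Polynomial.X ^ k) * A := by
      simp [pow_succ, mul_assoc]
    have h2 : (fun x : ℝ => (Polynomial.C c * Polynomial.X ^ (k+1)).eval ((x:ℝ):ℂ))
        = fun x : ℝ => (Polynomial.C c * Polynomial.X ^ k).eval ((x:ℝ):ℂ) * ((x:ℝ):ℂ) := by
      funext x; simp [pow_succ, mul_assoc]
    rw [h1, ih, h2, ← matFun_mul _ _ hA, matFun_id hA]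

lemma aeval_comm (p : Polynomial ℂ) (Y : Matrix n n ℂ) :
    Y * (Polynomial.aeval (Yᴴ * Y)) p = (Polynomial.aeval (Y * Yᴴ)) p * Y := by
  induction p using Polynomial.induction_on with
  | C c =>
    simp only [Polynomial.aeval_C, Algebra.algebraMap_eq_smul_one]
    rw [Matrix.mul_smul, Matrix.mul_one, Matrix.smul_mul, Matrix.one_mul]
  | add p q hp hq =>
    simp only [map_add, Matrix.mul_add, Matrix.add_mul, hp, hq]
  | monomial k c ih =>
    have h1 : ∀ B : Matrix n n ℂ,
        (Polynomial.aeval B) (Polynomial.C c * Polynomial.X ^ (k + 1))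
        = (Polynomial.aeval B) (Polynomial.C c * Polynomial.X ^ k) * B := by
      intro B; simp [pow_succ, mul_assoc]
    rw [h1, h1, ← Matrix.mul_assoc, ih]
    noncomm_ring

lemma key_identity (f : ℝ → ℂ) (Y : Matrix n n ℂ) :
    Y * matFun f (Yᴴ * Y) * Yᴴ = matFun (fun x => ((x : ℝ) : ℂ) * f x) (Y * Yᴴ) := by
  have hA : (Yᴴ * Y).IsHermitian := (Matrix.posSemidef_conjTranspose_mul_self Y).1
  have hB : (Y * Yᴴ).IsHermitian := (Matrix.posSemidef_self_mul_conjTranspose Y).1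
  set s : Finset ℂ :=
    (Finset.image (fun i => ((hA.eigenvalues i : ℝ) : ℂ)) Finset.univ) ∪
    (Finset.image (fun i => ((hB.eigenvalues i : ℝ) : ℂ)) Finset.univ) with hs
  set p : Polynomial ℂ := Lagrange.interpolate s id (fun z => f z.re) with hp
  have hinj : Set.InjOn (id : ℂ → ℂ) s := Function.injective_id.injOn
  have heval : ∀ z : ℂ, z ∈ s → p.eval z = f z.re := by
    intro z hz
    simpa [hp] using Lagrange.eval_interpolate_at_node (fun z => f z.re) hinj hz
  have hevalA : ∀ i, p.eval ((hA.eigenvalues i : ℝ) : ℂ) = f (hA.eigenvalues i) := by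
    intro i
    rw [heval _ (by simp [hs])]
    simp
  have hevalB : ∀ i, p.eval ((hB.eigenvalues i : ℝ) : ℂ) = f (hB.eigenvalues i) := by
    intro i
    rw [heval _ (by simp [hs])]
    simp
  have e1 : matFun f (Yᴴ * Y) = (Polynomial.aeval (Yᴴ * Y)) p := by
    rw [aeval_eq_matFun p hA]
    exact matFun_congr hA (fun i => (hevalA i).symm)
  have e3 : matFun (fun x => p.eval ((x:ℝ):ℂ)) (Y * Yᴴ) * matFun (fun x => ((x:ℝ):ℂ)) (Y * Yᴴ)
      = matFun (fun x => ((x : ℝ) : ℂ) * f x) (Y * Yᴴ) := by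
    rw [matFun_mul _ _ hB]
    exact matFun_congr hB (fun i => by rw [hevalB i, mul_comm])
  rw [e1, aeval_comm, Matrix.mul_assoc, aeval_eq_matFun p hB, ← e3, matFun_id hB]

end AltRepHelpers

/-- **Alternative representation of the BS-entropy**. -/
theorem bsEnt_alt_rep {d : ℕ}
    (ρ σ : Matrix (Fin d) (Fin d) ℂ)
    (hρ : IsState ρ) (hσ : IsState σ) (hσpd : σ.PosDef) :
    bsEnt ρ σ =
      ((σ * mXLogX (mpow σ (-(1/2)) * ρ * mpow σ (-(1/2)))).trace).re := by
  have hρH : ρ.IsHermitian := hρ.1.1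
  have hσH : σ.IsHermitian := hσpd.1
  have hσpos : ∀ i, 0 < hσH.eigenvalues i := fun i => hσpd.eigenvalues_pos i
  have hρpos : ∀ i, 0 ≤ hρH.eigenvalues i := fun i => hρ.1.eigenvalues_nonneg i
  unfold bsEnt
  set S := mpow σ (1/2 : ℝ) with hSdef
  set T := mpow σ (-(1/2) : ℝ) with hTdef
  set R := mpow ρ (1/2 : ℝ) with hRdef
  have hmpow : ∀ (A : Matrix (Fin d) (Fin d) ℂ) (r : ℝ),
      mpow A r = matFun (fun x => ((x ^ r : ℝ) : ℂ)) A := fun _ _ => rfl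
  have hST : S * T = 1 := by
    rw [hSdef, hTdef, hmpow, hmpow, matFun_mul _ _ hσH]
    have h : matFun (fun x => ((x ^ (1/2:ℝ) : ℝ) : ℂ) * ((x ^ (-(1/2):ℝ) : ℝ) : ℂ)) σ
        = matFun (fun _ => (1:ℂ)) σ := by
      refine matFun_congr hσH fun i => ?_
      rw [← Complex.ofReal_mul, ← Real.rpow_add (hσpos i)]
      norm_num
    rw [h, matFun_const 1 hσH, one_smul]
  have hTS : T * S = 1 := by
    rw [hSdef, hTdef, hmpow, hmpow, matFun_mul _ _ hσH]
    have h : matFun (fun x => ((x ^ (-(1/2):ℝ) : ℝ) : ℂ) * ((x ^ (1/2:ℝ) : ℝ) : ℂ)) σ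
        = matFun (fun _ => (1:ℂ)) σ := by
      refine matFun_congr hσH fun i => ?_
      rw [← Complex.ofReal_mul, ← Real.rpow_add (hσpos i)]
      norm_num
    rw [h, matFun_const 1 hσH, one_smul]
  have hSS : S * S = σ := by
    rw [hSdef, hmpow, matFun_mul _ _ hσH]
    have h : matFun (fun x => ((x ^ (1/2:ℝ) : ℝ) : ℂ) * ((x ^ (1/2:ℝ) : ℝ) : ℂ)) σ
        = matFun (fun x => ((x : ℝ) : ℂ)) σ := by
      refine matFun_congr hσH fun i => ?_
      rw [← Complex.ofReal_mul, ← Real.rpow_add (hσpos i)]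
      norm_num
    rw [h, matFun_id hσH]
  have hRR : R * R = ρ := by
    rw [hRdef, hmpow, matFun_mul _ _ hρH]
    have h : matFun (fun x => ((x ^ (1/2:ℝ) : ℝ) : ℂ) * ((x ^ (1/2:ℝ) : ℝ) : ℂ)) ρ
        = matFun (fun x => ((x : ℝ) : ℂ)) ρ := by
      refine matFun_congr hρH fun i => ?_
      rcases (hρpos i).eq_or_lt with h0|h0
      · rw [← h0]
        norm_num [Real.zero_rpow]
      · rw [← Complex.ofReal_mul, ← Real.rpow_add h0]
        norm_num
    rw [h, matFun_id hρH]
  have hσinv : mpow σ (-1 : ℝ) = T * T := by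
    rw [hTdef, hmpow, hmpow, matFun_mul _ _ hσH]
    refine (matFun_congr hσH fun i => ?_).symm
    rw [← Complex.ofReal_mul, ← Real.rpow_add (hσpos i)]
    norm_num
  have hTH : Tᴴ = T := by
    rw [hTdef, hmpow]; exact matFun_real_isHermitian _ hσH
  have hRH : Rᴴ = R := by
    rw [hRdef, hmpow]; exact matFun_real_isHermitian _ hρH
  set Y := T * R with hYdef
  have hYconj : Yᴴ = R * T := by
    rw [hYdef, Matrix.conjTranspose_mul, hTH, hRH]
  have hR1 : S * Y = R := by rw [hYdef, ← Matrix.mul_assoc, hST, Matrix.one_mul]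
  have hR2 : Yᴴ * S = R := by rw [hYconj, Matrix.mul_assoc, hTS, Matrix.mul_one]
  have harg : R * mpow σ (-1 : ℝ) * R = Yᴴ * Y := by
    rw [hσinv, hYconj, hYdef]
    noncomm_ring
  have key2 : Y * mlog (Yᴴ * Y) * Yᴴ = mXLogX (Y * Yᴴ) := by
    have h := key_identity (fun x => ((Real.log x : ℝ) : ℂ)) Y
    have h2 : (fun x : ℝ => ((x:ℝ):ℂ) * ((Real.log x : ℝ):ℂ))
        = fun x : ℝ => ((x * Real.log x : ℝ) : ℂ) := by
      funext x; push_cast; ring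
    simpa [mlog, mXLogX, h2] using h
  have hYY : Y * Yᴴ = T * ρ * T := by
    rw [hYconj, hYdef, ← hRR]
    noncomm_ring
  have hmat : S * (Y * mlog (Yᴴ * Y) * Yᴴ) * S = R * mlog (Yᴴ * Y) * R := by
    calc S * (Y * mlog (Yᴴ * Y) * Yᴴ) * S
        = (S * Y) * mlog (Yᴴ * Y) * (Yᴴ * S) := by noncomm_ring
      _ = R * mlog (Yᴴ * Y) * R := by rw [hR1, hR2]
  have tr1 : (ρ * mlog (Yᴴ * Y)).trace = (σ * mXLogX (Y * Yᴴ)).trace := by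
    calc (ρ * mlog (Yᴴ * Y)).trace
        = (R * (R * mlog (Yᴴ * Y))).trace := by rw [← hRR, Matrix.mul_assoc]
      _ = ((R * mlog (Yᴴ * Y)) * R).trace := Matrix.trace_mul_comm _ _
      _ = (S * (Y * mlog (Yᴴ * Y) * Yᴴ) * S).trace := by
          rw [hmat, Matrix.mul_assoc]
      _ = (S * mXLogX (Y * Yᴴ) * S).trace := by rw [key2]
      _ = ((S * S) * mXLogX (Y * Yᴴ)).trace := Matrix.trace_mul_cycle S (mXLogX (Y * Yᴴ)) S
      _ = (σ * mXLogX (Y * Yᴴ)).trace := by rw [hSS]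
  rw [harg, tr1, hYY]

end QPaper
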